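/- Let k ≥ 1. For all z1, z2, z3 ∈ ℂ one has det M(z3, z2, z1) = (−1)^k · det M(z1, z2, z3). -/

import Mathlib

/-- The `2k × 2k` matrix `M(z1, z2, z3)` of Mirebeau: for `1 ≤ i ≤ 2k` and `1 ≤ j ≤ k`
(here written with 0-based indices), `M_{i,j} = (z2^{i+j-1} - z1^{i+j-1})/(i+j-1)` and
`M_{i,j+k} = (z3^{i+j-1} - z1^{i+j-1})/(i+j-1)`. -/
noncomputable def Mmat (k : ℕ) (z1 z2 z3 : ℂ) : Matrix (Fin (2 * k)) (Fin (2 * k)) ℂ :=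
  Matrix.of fun i j =>
    if (j : ℕ) < k then
      (z2 ^ ((i : ℕ) + (j : ℕ) + 1) - z1 ^ ((i : ℕ) + (j : ℕ) + 1)) /
        (((i : ℕ) + (j : ℕ) + 1 : ℕ) : ℂ)
    else
      (z3 ^ ((i : ℕ) + ((j : ℕ) - k) + 1) - z1 ^ ((i : ℕ) + ((j : ℕ) - k) + 1)) /
        (((i : ℕ) + ((j : ℕ) - k) + 1 : ℕ) : ℂ)

/-- The column-operation matrix `[[I, 0], [-I, -I]]`. -/
noncomputable def Bmat (k : ℕ) : Matrix (Fin (2 * k)) (Fin (2 * k)) ℂ :=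
  Matrix.of fun i j =>
    if (j : ℕ) < k then
      (if (i : ℕ) = (j : ℕ) then 1 else if (i : ℕ) = (j : ℕ) + k then -1 else 0)
    else
      (if (i : ℕ) = (j : ℕ) then -1 else 0)

lemma Bmat_lowerTriangular (k : ℕ) : (Bmat k).BlockTriangular OrderDual.toDual := by
  intro i j hij
  have h : (i : ℕ) < (j : ℕ) := hij
  simp only [Bmat, Matrix.of_apply]
  split_ifs with h1 h2 h3 h4 <;> first | rfl | omega

lemma det_Bmat (k : ℕ) : (Bmat k).det = (-1 : ℂ) ^ k := by
  rw [Matrix.det_of_lowerTriangular _ (Bmat_lowerTriangular k)]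
  have hdiag : ∀ i : Fin (2 * k), Bmat k i i = if (i : ℕ) < k then 1 else -1 := by
    intro i
    by_cases h : (i : ℕ) < k <;> simp [Bmat, h]
  simp_rw [hdiag]
  rw [Finset.prod_ite, Finset.prod_const, Finset.prod_const, one_pow, one_mul]
  congr 1
  have hf : Finset.filter (fun i : Fin (2 * k) => ¬ (i : ℕ) < k) Finset.univ
      = Finset.map (⟨fun i : Fin k => (⟨(i : ℕ) + k, by omega⟩ : Fin (2 * k)),
          fun a b h => by
            have hh : (a : ℕ) + k = (b : ℕ) + k := congrArg Fin.val h
            exact Fin.ext (by omega)⟩ : Fin k ↪ Fin (2 * k)) Finset.univ := by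
    ext i
    simp only [Finset.mem_filter, Finset.mem_univ, true_and, Finset.mem_map,
      Function.Embedding.coeFn_mk, Fin.ext_iff]
    constructor
    · intro h
      exact ⟨⟨(i : ℕ) - k, by omega⟩, by show (i : ℕ) - k + k = (i : ℕ); omega⟩
    · rintro ⟨a, ha⟩
      have ha' : (a : ℕ) + k = (i : ℕ) := ha
      omega
  rw [hf, Finset.card_map, Finset.card_univ, Fintype.card_fin]

lemma Mmat_swap_eq (k : ℕ) (z1 z2 z3 : ℂ) :
    Mmat k z3 z2 z1 = Mmat k z1 z2 z3 * Bmat k := by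
  ext i j
  rw [Matrix.mul_apply]
  by_cases hj : (j : ℕ) < k
  · -- two nonzero terms: l = j and l = j + k
    have hjk : (j : ℕ) + k < 2 * k := by omega
    set j' : Fin (2 * k) := ⟨(j : ℕ) + k, hjk⟩ with hj'
    have hne : j ≠ j' := by
      simp only [hj', ne_eq, Fin.ext_iff]
      omega
    have hsub : ({j, j'} : Finset (Fin (2 * k))) ⊆ Finset.univ := Finset.subset_univ _
    have hzero : ∀ l ∈ Finset.univ, l ∉ ({j, j'} : Finset (Fin (2 * k))) →
        Mmat k z1 z2 z3 i l * Bmat k l j = 0 := by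
      intro l _ hl
      simp only [Finset.mem_insert, Finset.mem_singleton] at hl
      push_neg at hl
      have h1 : (l : ℕ) ≠ (j : ℕ) := fun h => hl.1 (Fin.ext h)
      have h2 : (l : ℕ) ≠ (j : ℕ) + k := fun h => hl.2 (Fin.ext h)
      simp only [Bmat, Matrix.of_apply, if_pos hj, if_neg h1, if_neg h2, mul_zero]
    rw [← Finset.sum_subset hsub hzero, Finset.sum_pair hne]
    have h2 : ¬ ((j : ℕ) + k < k) := by omega
    have h3 : (j : ℕ) + k - k = (j : ℕ) := by omega
    have h4 : ¬ ((j : ℕ) = (j : ℕ) + k) := by omega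
    have h4b : ¬ ((j : ℕ) + k = (j : ℕ)) := by omega
    simp only [Mmat, Bmat, Matrix.of_apply, hj', if_pos hj, if_neg h2, h3,
      if_pos rfl, if_neg h4, if_neg h4b, if_true]
    ring
  · -- one nonzero term: l = j
    rw [Finset.sum_eq_single j ?_ (by simp)]
    · simp only [Mmat, Bmat, Matrix.of_apply, if_neg hj]
      norm_num
      ring
    · intro l _ hl
      have h1 : (l : ℕ) ≠ (j : ℕ) := fun h => hl (Fin.ext h)
      simp only [Bmat, Matrix.of_apply, if_neg hj, if_neg h1, mul_zero]

theorem det_Mmat_swap (k : ℕ) (hk : 1 ≤ k) (z1 z2 z3 : ℂ) :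
    Matrix.det (Mmat k z3 z2 z1) = (-1 : ℂ) ^ k * Matrix.det (Mmat k z1 z2 z3) := by
  rw [Mmat_swap_eq, Matrix.det_mul, det_Bmat, mul_comm]
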